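/- Optimality of the soft fixed point: let Q* be the unique fixed point of the soft Bellman operator 𝒯. Then for every conditional policy π and every opponent model ρ, the unique fixed point Q_{π,ρ} of the policy-evaluation operator 𝒯_{π,ρ} satisfies Q_{π,ρ}(s,a,b) ≤ Q*(s,a,b) for all (s,a,b). -/

import Mathlib

/-- The soft Bellman operator
(𝒯Q)(s,a,b) = R(s,a,b) + γ·∑_{s'} p(s,a,b,s')·log ∑_{b'} P(s',b')·(∑_{a'} exp(Q(s',a',b')/α))^α. -/
noncomputable def softBellman {S A B : Type*} [Fintype S] [Fintype A] [Fintype B]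
    (α γ : ℝ) (R : S × A × B → ℝ) (p : S → A → B → S → ℝ) (P : S → B → ℝ)
    (Q : S × A × B → ℝ) : S × A × B → ℝ :=
  fun x => R x + γ * ∑ s', p x.1 x.2.1 x.2.2 s' *
    Real.log (∑ b', P s' b' * (∑ a', Real.exp (Q (s', a', b') / α)) ^ α)

/-- The policy-evaluation operator
(𝒯_{π,ρ}Q)(s,a,b) = R(s,a,b) + γ·∑_{s'} p(s,a,b,s')·( ∑_{b'} ρ(s',b')·( ∑_{a'}
π(s',b',a')·(Q(s',a',b') − α·log π(s',b',a')) ) − ∑_{b'} ρ(s',b')·log(ρ(s',b')/P(s',b')) ). -/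
noncomputable def evalOp {S A B : Type*} [Fintype S] [Fintype A] [Fintype B]
    (α γ : ℝ) (R : S × A × B → ℝ) (p : S → A → B → S → ℝ) (P : S → B → ℝ)
    (π : S → B → A → ℝ) (ρ : S → B → ℝ)
    (Q : S × A × B → ℝ) : S × A × B → ℝ :=
  fun x => R x + γ * ∑ s', p x.1 x.2.1 x.2.2 s' *
    ((∑ b', ρ s' b' *
        (∑ a', π s' b' a' * (Q (s', a', b') - α * Real.log (π s' b' a'))))
      - ∑ b', ρ s' b' * Real.log (ρ s' b' / P s' b'))

open Finset

/-- Gibbs variational inequality with weights. -/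
lemma gibbs {ι : Type*} [Fintype ι] [Nonempty ι] (w c F : ι → ℝ)
    (hw : ∀ i, 0 ≤ w i) (hw1 : ∑ i, w i = 1) (hc : ∀ i, 0 < c i) :
    ∑ i, w i * (F i + Real.log (c i) - Real.log (w i)) ≤
      Real.log (∑ i, c i * Real.exp (F i)) := by
  set T := ∑ i, c i * Real.exp (F i) with hT
  have hTpos : 0 < T :=
    Finset.sum_pos (fun i _ => mul_pos (hc i) (Real.exp_pos _)) Finset.univ_nonempty
  have hterm : ∀ i, w i * (F i + Real.log (c i) - Real.log (w i)) ≤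
      c i * Real.exp (F i) / T - w i + w i * Real.log T := by
    intro i
    rcases eq_or_lt_of_le (hw i) with h0 | hpos
    · rw [← h0]
      have : 0 ≤ c i * Real.exp (F i) / T := div_nonneg (mul_pos (hc i) (Real.exp_pos _)).le hTpos.le
      simpa using this
    · have hy : 0 < c i * Real.exp (F i) / w i := div_pos (mul_pos (hc i) (Real.exp_pos _)) hpos
      have hlogy : Real.log (c i * Real.exp (F i) / w i) =
          F i + Real.log (c i) - Real.log (w i) := by
        rw [Real.log_div (mul_pos (hc i) (Real.exp_pos _)).ne' (ne_of_gt hpos),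
          Real.log_mul (ne_of_gt (hc i)) (Real.exp_ne_zero _), Real.log_exp]
        ring
      have h1 : Real.log (c i * Real.exp (F i) / w i) - Real.log T ≤
          (c i * Real.exp (F i) / w i) / T - 1 := by
        have h := Real.log_le_sub_one_of_pos
          (div_pos hy hTpos)
        rwa [Real.log_div (ne_of_gt hy) (ne_of_gt hTpos)] at h
      have h2 := mul_le_mul_of_nonneg_left h1 (hw i)
      rw [hlogy] at h2
      have h3 : w i * ((c i * Real.exp (F i) / w i) / T - 1)
          = c i * Real.exp (F i) / T - w i := by
        field_simp
      rw [h3] at h2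
      linarith [h2]
  calc ∑ i, w i * (F i + Real.log (c i) - Real.log (w i))
      ≤ ∑ i, (c i * Real.exp (F i) / T - w i + w i * Real.log T) :=
        Finset.sum_le_sum (fun i _ => hterm i)
    _ = Real.log T := by
        rw [Finset.sum_add_distrib, Finset.sum_sub_distrib, ← Finset.sum_div, ← hT,
          div_self (ne_of_gt hTpos), hw1, ← Finset.sum_mul, hw1]
        ring

/-- Key per-state inequality: expected soft value under (π, ρ) minus KL penalty
is at most the log-sum-exp soft value. -/
lemma key_ineq {A B : Type*} [Fintype A] [Fintype B] [Nonempty A] [Nonempty B]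
    (α : ℝ) (hα : 0 < α) (P ρ : B → ℝ) (π : B → A → ℝ)
    (hP : ∀ b, 0 < P b) (hρ : ∀ b, 0 ≤ ρ b) (hρ1 : ∑ b, ρ b = 1)
    (hπ : ∀ b a, 0 ≤ π b a) (hπ1 : ∀ b, ∑ a, π b a = 1)
    (q : A → B → ℝ) :
    (∑ b, ρ b * ∑ a, π b a * (q a b - α * Real.log (π b a)))
      - ∑ b, ρ b * Real.log (ρ b / P b)
      ≤ Real.log (∑ b, P b * (∑ a, Real.exp (q a b / α)) ^ α) := by
  set V : B → ℝ := fun b => α * Real.log (∑ a, Real.exp (q a b / α)) with hV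
  have inner : ∀ b, (∑ a, π b a * (q a b - α * Real.log (π b a))) ≤ V b := by
    intro b
    have hg := gibbs (π b) (fun _ => (1 : ℝ)) (fun a => q a b / α)
      (hπ b) (hπ1 b) (fun _ => one_pos)
    simp only [Real.log_one, one_mul] at hg
    have heq : ∑ a, π b a * (q a b - α * Real.log (π b a))
        = α * ∑ a, π b a * (q a b / α + 0 - Real.log (π b a)) := by
      rw [Finset.mul_sum]
      refine Finset.sum_congr rfl (fun a _ => ?_)
      field_simp
      ring
    rw [heq, hV]
    have := mul_le_mul_of_nonneg_left hg (le_of_lt hα)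
    simpa using this
  have step1 : (∑ b, ρ b * ∑ a, π b a * (q a b - α * Real.log (π b a)))
      - ∑ b, ρ b * Real.log (ρ b / P b)
      ≤ ∑ b, ρ b * (V b + Real.log (P b) - Real.log (ρ b)) := by
    have h1 : (∑ b, ρ b * ∑ a, π b a * (q a b - α * Real.log (π b a)))
        ≤ ∑ b, ρ b * V b :=
      Finset.sum_le_sum (fun b _ => mul_le_mul_of_nonneg_left (inner b) (hρ b))
    have h2 : ∑ b, ρ b * V b - ∑ b, ρ b * Real.log (ρ b / P b)
        = ∑ b, ρ b * (V b + Real.log (P b) - Real.log (ρ b)) := by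
      rw [← Finset.sum_sub_distrib]
      congr 1; ext b
      rcases eq_or_lt_of_le (hρ b) with h0 | hpos
      · rw [← h0]; ring
      · rw [Real.log_div (ne_of_gt hpos) (ne_of_gt (hP b))]; ring
      
    linarith [h2 ▸ sub_le_sub_right h1 (∑ b, ρ b * Real.log (ρ b / P b))]
  have step2 : ∑ b, ρ b * (V b + Real.log (P b) - Real.log (ρ b))
      ≤ Real.log (∑ b, P b * Real.exp (V b)) := gibbs ρ P V hρ hρ1 hP
  have hexp : ∀ b, Real.exp (V b) = (∑ a, Real.exp (q a b / α)) ^ α := by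
    intro b
    have hs : 0 < ∑ a, Real.exp (q a b / α) :=
      Finset.sum_pos (fun a _ => Real.exp_pos _) Finset.univ_nonempty
    rw [Real.rpow_def_of_pos hs, hV, mul_comm]
  calc (∑ b, ρ b * ∑ a, π b a * (q a b - α * Real.log (π b a)))
      - ∑ b, ρ b * Real.log (ρ b / P b)
      ≤ ∑ b, ρ b * (V b + Real.log (P b) - Real.log (ρ b)) := step1
    _ ≤ Real.log (∑ b, P b * Real.exp (V b)) := step2
    _ = Real.log (∑ b, P b * (∑ a, Real.exp (q a b / α)) ^ α) := by
        congr 1; exact Finset.sum_congr rfl (fun b _ => by rw [hexp b])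

/-- Optimality of the soft fixed point: if Q* is the fixed point of
the soft Bellman operator 𝒯, then for every conditional policy π and every opponent
model ρ, the fixed point Q_{π,ρ} of 𝒯_{π,ρ} satisfies Q_{π,ρ} ≤ Q* pointwise. -/
theorem soft_fixed_point_optimality
    {S A B : Type*} [Fintype S] [Fintype A] [Fintype B]
    [Nonempty S] [Nonempty A] [Nonempty B]
    (α γ : ℝ) (hα : 0 < α) (hγ₀ : 0 ≤ γ) (hγ₁ : γ < 1)
    (R : S × A × B → ℝ)
    (p : S → A → B → S → ℝ)
    (hp_nonneg : ∀ s a b s', 0 ≤ p s a b s') (hp_sum : ∀ s a b, ∑ s', p s a b s' = 1)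
    (P : S → B → ℝ) (hP_pos : ∀ s b, 0 < P s b) (hP_sum : ∀ s, ∑ b, P s b = 1)
    (Qstar : S × A × B → ℝ) (hQstar : softBellman α γ R p P Qstar = Qstar)
    (π : S → B → A → ℝ)
    (hπ_nonneg : ∀ s b a, 0 ≤ π s b a) (hπ_sum : ∀ s b, ∑ a, π s b a = 1)
    (ρ : S → B → ℝ)
    (hρ_nonneg : ∀ s b, 0 ≤ ρ s b) (hρ_sum : ∀ s, ∑ b, ρ s b = 1)
    (Qpr : S × A × B → ℝ) (hQpr : evalOp α γ R p P π ρ Qpr = Qpr) :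
    ∀ x : S × A × B, Qpr x ≤ Qstar x := by
  classical
  set D := (Finset.univ : Finset (S × A × B)).sup' Finset.univ_nonempty
      (fun x => Qpr x - Qstar x) with hD
  set M := max D 0 with hM
  have hM0 : 0 ≤ M := le_max_right _ _
  have hDM : ∀ x : S × A × B, Qpr x - Qstar x ≤ M := fun x =>
    le_trans (Finset.le_sup' (fun x => Qpr x - Qstar x) (Finset.mem_univ x)) (le_max_left _ _)
  have hstep : ∀ x : S × A × B, Qpr x - Qstar x ≤ γ * M := by
    rintro ⟨s, a, b⟩
    have hterm : ∀ s' : S,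
        ((∑ b', ρ s' b' * (∑ a', π s' b' a' * (Qpr (s', a', b') - α * Real.log (π s' b' a'))))
          - ∑ b', ρ s' b' * Real.log (ρ s' b' / P s' b'))
        ≤ Real.log (∑ b', P s' b' * (∑ a', Real.exp (Qstar (s', a', b') / α)) ^ α) + M := by
      intro s'
      have h1 : (∑ b', ρ s' b' *
            (∑ a', π s' b' a' * (Qpr (s', a', b') - α * Real.log (π s' b' a'))))
          ≤ (∑ b', ρ s' b' *
            (∑ a', π s' b' a' * (Qstar (s', a', b') - α * Real.log (π s' b' a')))) + M := by
        have inner : ∀ b', (∑ a', π s' b' a' * (Qpr (s', a', b') - α * Real.log (π s' b' a')))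
            ≤ (∑ a', π s' b' a' * (Qstar (s', a', b') - α * Real.log (π s' b' a'))) + M := by
          intro b'
          have hdiff : ∑ a', π s' b' a' * (Qpr (s', a', b') - Qstar (s', a', b')) ≤ M := by
            calc ∑ a', π s' b' a' * (Qpr (s', a', b') - Qstar (s', a', b'))
                ≤ ∑ a', π s' b' a' * M := Finset.sum_le_sum (fun a' _ =>
                  mul_le_mul_of_nonneg_left (hDM _) (hπ_nonneg _ _ _))
              _ = M := by rw [← Finset.sum_mul, hπ_sum, one_mul]
          have hsplit : ∑ a', π s' b' a' * (Qpr (s', a', b') - α * Real.log (π s' b' a'))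
              - ∑ a', π s' b' a' * (Qstar (s', a', b') - α * Real.log (π s' b' a'))
              = ∑ a', π s' b' a' * (Qpr (s', a', b') - Qstar (s', a', b')) := by
            rw [← Finset.sum_sub_distrib]
            exact Finset.sum_congr rfl (fun a' _ => by ring)
          linarith [hsplit ▸ hdiff]
        calc (∑ b', ρ s' b' *
              (∑ a', π s' b' a' * (Qpr (s', a', b') - α * Real.log (π s' b' a'))))
            ≤ ∑ b', ρ s' b' *
              ((∑ a', π s' b' a' * (Qstar (s', a', b') - α * Real.log (π s' b' a'))) + M) :=
              Finset.sum_le_sum (fun b' _ =>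
                mul_le_mul_of_nonneg_left (inner b') (hρ_nonneg _ _))
          _ = (∑ b', ρ s' b' *
              (∑ a', π s' b' a' * (Qstar (s', a', b') - α * Real.log (π s' b' a')))) + M := by
              rw [show ∀ f g : B → ℝ, ∑ b', (f b' * (g b' + M)) = ∑ b', (f b' * g b' + f b' * M)
                  from fun f g => Finset.sum_congr rfl (fun b' _ => by ring),
                Finset.sum_add_distrib, ← Finset.sum_mul, hρ_sum, one_mul]
      have h2 := key_ineq α hα (P s') (ρ s') (π s') (hP_pos s') (hρ_nonneg s') (hρ_sum s')
        (fun b a => hπ_nonneg s' b a) (hπ_sum s') (fun a' b' => Qstar (s', a', b'))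
      linarith
    have e1 : Qpr (s, a, b) = evalOp α γ R p P π ρ Qpr (s, a, b) := by rw [hQpr]
    have e2 : Qstar (s, a, b) = softBellman α γ R p P Qstar (s, a, b) := by rw [hQstar]
    rw [e1, e2]
    simp only [evalOp, softBellman]
    have hsum : ∑ s', p s a b s' *
        ((∑ b', ρ s' b' * (∑ a', π s' b' a' * (Qpr (s', a', b') - α * Real.log (π s' b' a'))))
          - ∑ b', ρ s' b' * Real.log (ρ s' b' / P s' b'))
        ≤ (∑ s', p s a b s' *
          Real.log (∑ b', P s' b' * (∑ a', Real.exp (Qstar (s', a', b') / α)) ^ α)) + M := by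
      calc ∑ s', p s a b s' *
          ((∑ b', ρ s' b' * (∑ a', π s' b' a' * (Qpr (s', a', b') - α * Real.log (π s' b' a'))))
            - ∑ b', ρ s' b' * Real.log (ρ s' b' / P s' b'))
          ≤ ∑ s', p s a b s' *
            (Real.log (∑ b', P s' b' * (∑ a', Real.exp (Qstar (s', a', b') / α)) ^ α) + M) :=
            Finset.sum_le_sum (fun s' _ =>
              mul_le_mul_of_nonneg_left (hterm s') (hp_nonneg _ _ _ _))
        _ = (∑ s', p s a b s' *
            Real.log (∑ b', P s' b' * (∑ a', Real.exp (Qstar (s', a', b') / α)) ^ α)) + M := by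
            rw [show ∀ f g : S → ℝ, ∑ s', (f s' * (g s' + M)) = ∑ s', (f s' * g s' + f s' * M)
                from fun f g => Finset.sum_congr rfl (fun s' _ => by ring),
              Finset.sum_add_distrib, ← Finset.sum_mul, hp_sum, one_mul]
    have := mul_le_mul_of_nonneg_left hsum hγ₀
    
    nlinarith [this]
  have hDle : D ≤ γ * M := Finset.sup'_le _ _ (fun x _ => hstep x)
  have hMle : M ≤ γ * M := max_le hDle (mul_nonneg hγ₀ hM0)
  have hMneg : M ≤ 0 := by nlinarith
  intro x
  have := hDM x
  linarith
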